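/- For every even dimension d and every real unit vector φ ∈ R^d ⊂ C^d, the overlap |⟨φ, X^{d/2} Z φ⟩|² = 0, where X is the cyclic shift and Z the phase operator. Consequently, no real unit vector can be a fiducial state for a Weyl-Heisenberg covariant SIC-POVM in even dimension, since a fiducial would require this overlap to equal 1/(d+1). -/

import Mathlib

open Matrix
open Fin.NatCast

/-- The cyclic shift `X = ∑ₖ |k+1⟩⟨k|`. -/
def Xmat (d : ℕ) [NeZero d] : Matrix (Fin d) (Fin d) ℂ :=
  fun j k => if j = k + 1 then 1 else 0

/-- The phase operator `Z = ∑ₖ ω^k |k⟩⟨k|`, `ω = e^{2πi/d}`. -/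
noncomputable def Zmat (d : ℕ) : Matrix (Fin d) (Fin d) ℂ :=
  Matrix.diagonal fun j => Complex.exp (2 * Real.pi * Complex.I * ((j : ℕ) : ℂ) / d)

lemma Xpow_apply (d : ℕ) [NeZero d] (n : ℕ) (j k : Fin d) :
    (Xmat d ^ n) j k = if j = k + (n : Fin d) then 1 else 0 := by
  induction n generalizing j k with
  | zero => simp [Matrix.one_apply, eq_comm]
  | succ n ih =>
    rw [pow_succ, Matrix.mul_apply]
    simp only [Xmat, ih]
    have : ∀ l : Fin d, (if j = l + (n:Fin d) then (1:ℂ) else 0) * (if l = k + 1 then 1 else 0)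
        = if l = k + 1 then (if j = l + (n:Fin d) then (1:ℂ) else 0) else 0 := by
      intro l; split <;> simp
    rw [Finset.sum_congr rfl fun l _ => this l, Finset.sum_ite_eq' Finset.univ (k+1)]
    simp only [Finset.mem_univ, if_true]
    have hcast : k + ((n:ℕ)+1 : ℕ) = k + 1 + (n : Fin d) := by
      push_cast; abel
    rw [hcast]

lemma exp_mod (d : ℕ) [NeZero d] (x : ℕ) :
    Complex.exp (2 * Real.pi * Complex.I * ((x % d : ℕ) : ℂ) / d)
      = Complex.exp (2 * Real.pi * Complex.I * (x : ℂ) / d) := by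
  have hd : (d : ℂ) ≠ 0 := Nat.cast_ne_zero.mpr (NeZero.ne d)
  conv_rhs => rw [← Nat.mod_add_div x d]
  push_cast
  rw [show 2 * (Real.pi:ℂ) * Complex.I * ((x % d : ℕ) + d * (x / d : ℕ)) / d
      = 2 * Real.pi * Complex.I * ((x % d : ℕ):ℂ) / d + (x / d : ℕ) * (2 * Real.pi * Complex.I) by
    field_simp]
  rw [Complex.exp_add, Complex.exp_nat_mul_two_pi_mul_I]
  ring

lemma exp_shift (d : ℕ) [NeZero d] (hd : Even d) (a : Fin d) :
    Complex.exp (2 * Real.pi * Complex.I * (((a + ((d/2 : ℕ) : Fin d)) : Fin d).val : ℂ) / d)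
      = - Complex.exp (2 * Real.pi * Complex.I * ((a.val : ℕ) : ℂ) / d) := by
  have hd2 : d / 2 < d := Nat.div_lt_self (Nat.pos_of_ne_zero (NeZero.ne d)) one_lt_two
  have hdc : (d : ℂ) ≠ 0 := Nat.cast_ne_zero.mpr (NeZero.ne d)
  have hval : ((a + ((d/2 : ℕ) : Fin d)) : Fin d).val = (a.val + d/2) % d := by
    rw [Fin.add_def, Fin.val_cast_of_lt hd2]
  rw [hval, exp_mod]
  push_cast
  rw [show 2 * (Real.pi:ℂ) * Complex.I * ((a.val : ℂ) + (d/2 : ℕ)) / d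
      = 2 * Real.pi * Complex.I * (a.val : ℂ) / d + 2 * Real.pi * Complex.I * ((d/2 : ℕ):ℂ) / d by ring]
  rw [Complex.exp_add]
  have h2 : ((d/2 : ℕ) : ℂ) * 2 = d := by
    obtain ⟨m, hm⟩ := hd
    subst hm
    rw [show (m + m)/2 = m by omega]
    push_cast; ring
  have : 2 * (Real.pi:ℂ) * Complex.I * ((d/2 : ℕ):ℂ) / d = Real.pi * Complex.I := by
    rw [div_eq_iff hdc, ← h2]; ring
  rw [this, Complex.exp_pi_mul_I]
  ring

/-- For every even `d` and every real unit vector `φ ∈ ℝ^d ⊂ ℂ^d`, the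
overlap `|⟨φ, X^{d/2} Z φ⟩|² = 0`; consequently `φ` cannot be a fiducial state of a
Weyl-Heisenberg covariant SIC-POVM (which would require this overlap to be `1/(d+1)`). -/
theorem no_real_fiducial_even_dim (d : ℕ) [NeZero d] (hd : Even d)
    (φ : Fin d → ℝ) (hunit : ∑ j, φ j ^ 2 = 1) :
    ‖star (fun j => (φ j : ℂ)) ⬝ᵥ
        ((Xmat d ^ (d / 2) * Zmat d) *ᵥ fun j => (φ j : ℂ))‖ ^ 2 = 0 ∧
    ¬ (∀ j k : Fin d, (j, k) ≠ (0, 0) →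
        ‖star (fun s => (φ s : ℂ)) ⬝ᵥ
            ((Xmat d ^ (j : ℕ) * Zmat d ^ (k : ℕ)) *ᵥ fun s => (φ s : ℂ))‖ ^ 2 =
          1 / (d + 1)) := by
  have hd1 : 1 < d := by
    rcases Nat.lt_or_ge d 2 with h | h
    · interval_cases d
      · exact absurd rfl (NeZero.ne 0)
      · exact absurd hd (by decide)
    · omega
  set m : Fin d := ((d/2 : ℕ) : Fin d) with hm
  have hmm : m + m = 0 := by
    obtain ⟨t, ht⟩ := hd
    have h : (d/2 + d/2) = d := by omega
    rw [hm, ← Nat.cast_add, h]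
    exact (Fin.natCast_self d)
  set v : Fin d → ℂ := fun j => (φ j : ℂ) with hv
  have hentry : ∀ j : Fin d, ((Xmat d ^ (d/2) * Zmat d) *ᵥ v) j
      = Complex.exp (2 * Real.pi * Complex.I * (((j - m).val : ℕ) : ℂ) / d) * v (j - m) := by
    intro j
    rw [Matrix.mulVec]
    unfold dotProduct
    have key : ∀ k : Fin d, (Xmat d ^ (d/2) * Zmat d) j k * v k
        = if k = j - m then Complex.exp (2 * Real.pi * Complex.I * ((k.val : ℕ) : ℂ) / d) * v k else 0 := by
      intro k
      rw [Zmat, Matrix.mul_diagonal, Xpow_apply]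
      have hiff : j = k + m ↔ k = j - m := by
        constructor
        · intro h; rw [h]; abel
        · intro h; rw [h]; abel
      rw [← hm]
      by_cases h : k = j - m
      · rw [if_pos (hiff.mpr h), if_pos h, one_mul]
      · rw [if_neg (fun hh => h (hiff.mp hh)), if_neg h, zero_mul, zero_mul]
    rw [Finset.sum_congr rfl fun k _ => key k, Finset.sum_ite_eq' Finset.univ (j - m)]
    simp
  set f : Fin d → ℂ := fun j => star (v j) * (Complex.exp (2 * Real.pi * Complex.I * (((j - m).val : ℕ) : ℂ) / d) * v (j - m)) with hf
  have hsum : star v ⬝ᵥ ((Xmat d ^ (d/2) * Zmat d) *ᵥ v) = ∑ j, f j := by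
    unfold dotProduct
    exact Finset.sum_congr rfl fun j _ => by rw [hentry j]; rfl
  have hfneg : ∀ j, f (j + m) = - f j := by
    intro j
    have h1 : j + m - m = j := by abel
    have h2 : j + m = j - m := by
      calc j + m = j - m + (m + m) := by abel
        _ = j - m := by rw [hmm, add_zero]
    have hexp := exp_shift d hd (j - m)
    rw [show j - m + ((d/2 : ℕ) : Fin d) = j from by rw [← hm]; abel] at hexp
    simp only [hf]
    simp only [h1]
    simp only [h2]
    rw [hexp]
    simp only [hv, Complex.star_def, Complex.conj_ofReal]
    ring
  have hS : ∑ j, f j = 0 := by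
    have hcomp := Equiv.sum_comp (Equiv.addRight m) f
    simp only [Equiv.coe_addRight] at hcomp
    have h2 : ∑ j, f (j + m) = - ∑ j, f j := by
      rw [← Finset.sum_neg_distrib]
      exact Finset.sum_congr rfl fun j _ => hfneg j
    rw [h2] at hcomp
    linear_combination (-1/2 : ℂ) * hcomp
  have hzero : ‖star v ⬝ᵥ ((Xmat d ^ (d/2) * Zmat d) *ᵥ v)‖ ^ 2 = 0 := by
    rw [hsum, hS]; simp
  refine ⟨hzero, ?_⟩
  intro h
  have hd2 : d / 2 < d := Nat.div_lt_self (by omega) one_lt_two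
  have hne : ((((d/2 : ℕ) : Fin d), (1 : Fin d)) : Fin d × Fin d) ≠ (0, 0) := by
    intro hc
    have : (1 : Fin d) = 0 := congrArg Prod.snd hc
    rw [Fin.one_eq_zero_iff] at this
    omega
  have hspec := h ((d/2 : ℕ) : Fin d) 1 hne
  rw [Fin.val_cast_of_lt hd2] at hspec
  have hone : ((1 : Fin d) : ℕ) = 1 := by
    rw [Fin.val_one']
    exact Nat.mod_eq_of_lt hd1
  rw [hone, pow_one] at hspec
  rw [hzero] at hspec
  have hpos : (0:ℝ) < 1 / (d + 1) := by positivity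
  rw [← hspec] at hpos
  exact lt_irrefl 0 hpos
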